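/- For every natural number t, all coefficients of the degree-t Chebyshev polynomial of the first kind Φ_t are at most (1+√2)^t in absolute value. -/
import Mathlib


/-- Φ_t, the degree-t Chebyshev polynomial of the first kind over ℝ:
Φ_0(x)=1, Φ_1(x)=x, Φ_{t+1}(x)=2x·Φ_t(x)−Φ_{t−1}(x). -/
noncomputable def Phi (t : ℕ) : Polynomial ℝ := Polynomial.Chebyshev.T ℝ t

lemma cheb_aux : ∀ t : ℕ, ∀ j : ℕ,
    |(Polynomial.Chebyshev.T ℝ t).coeff j| ≤ (1 + Real.sqrt 2) ^ t := by
  have hs : Real.sqrt 2 ^ 2 = 2 := Real.sq_sqrt (by norm_num)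
  have hc1 : (1:ℝ) ≤ 1 + Real.sqrt 2 := le_add_of_nonneg_right (Real.sqrt_nonneg 2)
  have hkey : ∀ n : ℕ, (1 + Real.sqrt 2) ^ (n+2)
      = 2 * (1 + Real.sqrt 2) ^ (n+1) + (1 + Real.sqrt 2) ^ n := by
    intro n
    have : (1 + Real.sqrt 2) ^ (n+2) = (1 + Real.sqrt 2) ^ n * (1 + Real.sqrt 2) ^ 2 := by ring
    rw [this]
    have h2 : (1 + Real.sqrt 2) ^ 2 = 2 * (1 + Real.sqrt 2) + 1 := by
      have := hs; nlinarith [hs]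
    rw [h2]; ring
  intro t
  induction t using Nat.twoStepInduction with
  | zero =>
    intro j
    simp only [Nat.cast_zero, Polynomial.Chebyshev.T_zero, pow_zero]
    rcases j with _ | j <;> simp [Polynomial.coeff_one]
  | one =>
    intro j
    simp only [Nat.cast_one, Polynomial.Chebyshev.T_one, pow_one]
    rcases j with _ | j
    · simp; positivity
    · rcases j with _ | j
      · rw [Polynomial.coeff_X_one, abs_one]; exact hc1
      · simp [Polynomial.coeff_X]
        positivity
  | more n ih ih1 =>
    intro j
    have hcast : ((n + 2 : ℕ) : ℤ) = (n : ℤ) + 2 := by push_cast; ring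
    rw [hcast, Polynomial.Chebyshev.T_add_two]
    have hc : ((n + 1 : ℕ) : ℤ) = (n : ℤ) + 1 := by push_cast; ring
    have ih1' : ∀ j : ℕ, |(Polynomial.Chebyshev.T ℝ ((n:ℤ)+1)).coeff j| ≤ (1 + Real.sqrt 2) ^ (n+1) := by
      intro j; have := ih1 j; rwa [hc] at this
    rw [hkey n]
    have hnn : (0:ℝ) ≤ (1 + Real.sqrt 2) ^ n := by positivity
    have hnn1 : (0:ℝ) ≤ (1 + Real.sqrt 2) ^ (n+1) := by positivity
    have hmono : (1 + Real.sqrt 2) ^ n ≤ (1 + Real.sqrt 2) ^ (n+1) :=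
      pow_le_pow_right₀ hc1 (by omega)
    rcases j with _ | j
    · have : (2 * Polynomial.X * Polynomial.Chebyshev.T ℝ ((n:ℤ)+1)
          - Polynomial.Chebyshev.T ℝ n).coeff 0
          = - (Polynomial.Chebyshev.T ℝ n).coeff 0 := by
        simp [Polynomial.coeff_sub, mul_assoc, Polynomial.coeff_X_mul_zero]
      rw [this, abs_neg]
      have := ih 0
      nlinarith
    · have : (2 * Polynomial.X * Polynomial.Chebyshev.T ℝ ((n:ℤ)+1)
          - Polynomial.Chebyshev.T ℝ n).coeff (j+1)
          = 2 * (Polynomial.Chebyshev.T ℝ ((n:ℤ)+1)).coeff j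
            - (Polynomial.Chebyshev.T ℝ n).coeff (j+1) := by
        rw [Polynomial.coeff_sub, mul_assoc]
        simp [Polynomial.coeff_X_mul]
      rw [this]
      have h1 := ih1' j
      have h2 := ih (j+1)
      calc |2 * (Polynomial.Chebyshev.T ℝ ((n:ℤ)+1)).coeff j
            - (Polynomial.Chebyshev.T ℝ n).coeff (j+1)|
          ≤ 2 * |(Polynomial.Chebyshev.T ℝ ((n:ℤ)+1)).coeff j|
            + |(Polynomial.Chebyshev.T ℝ n).coeff (j+1)| := by
            have := abs_sub (2 * (Polynomial.Chebyshev.T ℝ ((n:ℤ)+1)).coeff j)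
              ((Polynomial.Chebyshev.T ℝ n).coeff (j+1))
            rw [abs_mul] at this
            simpa using this
        _ ≤ 2 * (1 + Real.sqrt 2) ^ (n+1) + (1 + Real.sqrt 2) ^ n := by
            gcongr

/-- All coefficients of the degree-t Chebyshev polynomial of the first kind are
at most (1+√2)^t in absolute value. -/
theorem chebyshev_coeff_bound (t : ℕ) (j : ℕ) :
    |(Phi t).coeff j| ≤ (1 + Real.sqrt 2) ^ t := by
  exact cheb_aux t j
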